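/- Let ρ : (0,∞) → (0,∞) be a measurable weight with B := sup_{x>0} (∫_x^∞ ρ(t) dt)^{1/2} (∫_0^x ρ(t)^{-1} dt)^{1/2} < ∞. Then there exists a constant C < ∞ such that for all measurable u with ∫_0^∞ u(x)² ρ(x) dx < ∞, the inequality ∫_0^∞ (∫_0^x u(t) dt)² ρ(x) dx ≤ C ∫_0^∞ u(x)² ρ(x) dx holds. -/

import Mathlib

open MeasureTheory Set ENNReal


lemma measIoc_lt_le (ν : Measure ℝ) (hν : ∀ a : ℝ, ν {a} = 0) (x : ℝ) (r : ℝ≥0∞) :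
    ν ({t : ℝ | ν (Ioc 0 t) < r} ∩ Ioc 0 x) ≤ r := by
  set S := {t : ℝ | ν (Ioc 0 t) < r} ∩ Ioc 0 x with hSdef
  rcases eq_empty_or_nonempty S with h | h
  · simp [h]
  have hbdd : BddAbove S := ⟨x, fun t ht => ht.2.2⟩
  set τ := sSup S with hτ
  have hsub : S ⊆ Ioo 0 τ ∪ {τ} := by
    intro t ht
    rcases eq_or_lt_of_le (le_csSup hbdd ht) with h1 | h1
    · right; simp [h1, hτ]
    · left; exact ⟨ht.2.1, h1⟩
  have key : ν (Ioo 0 τ) ≤ r := by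
    have hch : ∀ n : ℕ, ∃ t ∈ S, τ - 1/(n+1) < t := by
      intro n
      apply exists_lt_of_lt_csSup h
      have : (0:ℝ) < 1/(n+1) := by positivity
      linarith
    choose t htS hlt using hch
    have hcover : Ioo 0 τ ⊆ ⋃ n, Ioc 0 (t n) := by
      intro y hy
      obtain ⟨n, hn⟩ : ∃ n : ℕ, 1/((n:ℝ)+1) < τ - y := exists_nat_one_div_lt (by linarith [hy.2])
      exact mem_iUnion.2 ⟨n, hy.1, by linarith [hlt n]⟩
    have hdir : Directed (· ⊆ ·) (fun n => Ioc (0:ℝ) (t n)) := by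
      intro n m
      rcases le_total (t n) (t m) with h' | h'
      · exact ⟨m, Ioc_subset_Ioc_right h', subset_rfl⟩
      · exact ⟨n, subset_rfl, Ioc_subset_Ioc_right h'⟩
    calc ν (Ioo 0 τ) ≤ ν (⋃ n, Ioc 0 (t n)) := measure_mono hcover
      _ = ⨆ n, ν (Ioc 0 (t n)) := hdir.measure_iUnion
      _ ≤ r := iSup_le fun n => (htS n).1.le
  calc ν S ≤ ν (Ioo 0 τ ∪ {τ}) := measure_mono hsub
    _ ≤ ν (Ioo 0 τ) + ν {τ} := measure_union_le _ _
    _ ≤ r := by rw [hν τ, add_zero]; exact key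

lemma measIoi_lt_le (ν : Measure ℝ) (hν : ∀ a : ℝ, ν {a} = 0) (x : ℝ) (r : ℝ≥0∞) :
    ν ({t : ℝ | ν (Ioi t) < r} ∩ Ioi x) ≤ r := by
  set S := {t : ℝ | ν (Ioi t) < r} ∩ Ioi x with hSdef
  rcases eq_empty_or_nonempty S with h | h
  · simp [h]
  have hbdd : BddBelow S := ⟨x, fun t ht => ht.2.le⟩
  set τ := sInf S with hτ
  have hsub : S ⊆ Ioi τ ∪ {τ} := by
    intro t ht
    rcases eq_or_lt_of_le (csInf_le hbdd ht) with h1 | h1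
    · right; simp [h1.symm, hτ]
    · left; exact h1
  have key : ν (Ioi τ) ≤ r := by
    have hch : ∀ n : ℕ, ∃ t ∈ S, t < τ + 1/(n+1) := by
      intro n
      apply exists_lt_of_csInf_lt h
      have : (0:ℝ) < 1/(n+1) := by positivity
      linarith
    choose t htS hlt using hch
    have hcover : Ioi τ ⊆ ⋃ n, Ioi (t n) := by
      intro y hy
      obtain ⟨n, hn⟩ : ∃ n : ℕ, 1/((n:ℝ)+1) < y - τ := exists_nat_one_div_lt (by simp at hy; linarith)
      exact mem_iUnion.2 ⟨n, by simp only [mem_Ioi]; linarith [hlt n]⟩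
    have hdir : Directed (· ⊆ ·) (fun n => Ioi (t n)) := by
      intro n m
      rcases le_total (t n) (t m) with h' | h'
      · exact ⟨n, subset_rfl, Ioi_subset_Ioi h'⟩
      · exact ⟨m, Ioi_subset_Ioi h', subset_rfl⟩
    calc ν (Ioi τ) ≤ ν (⋃ n, Ioi (t n)) := measure_mono hcover
      _ = ⨆ n, ν (Ioi (t n)) := hdir.measure_iUnion
      _ ≤ r := iSup_le fun n => (htS n).1.le
  calc ν S ≤ ν (Ioi τ ∪ {τ}) := measure_mono hsub
    _ ≤ ν (Ioi τ) + ν {τ} := measure_union_le _ _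
    _ ≤ r := by rw [hν τ, add_zero]; exact key


lemma key_bound {α : Type*} [MeasurableSpace α] (μ : Measure α) (h : α → ℝ≥0∞)
    (hm : AEMeasurable h μ)
    (H : ∀ r : ℝ≥0∞, μ {t | h t < r} ≤ r) :
    ∫⁻ t, h t ^ (-(2⁻¹ : ℝ)) ∂μ ≤ 2 * μ univ ^ (2⁻¹ : ℝ) := by
  rcases eq_or_ne (μ univ) 0 with hM0 | hM0
  · have : μ = 0 := Measure.measure_univ_eq_zero.mp hM0
    simp [this]
  rcases eq_or_ne (μ univ) ⊤ with hMtop | hMtop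
  · rw [hMtop, ENNReal.top_rpow_of_pos (by norm_num)]
    simp
  have hMr : 0 < (μ univ).toReal := ENNReal.toReal_pos hM0 hMtop
  set s0 : ℝ := (μ univ).toReal ^ (-(2⁻¹:ℝ)) with hs0def
  have hs0 : 0 < s0 := Real.rpow_pos_of_pos hMr _
  have hpos : μ {t | h t = 0} = 0 := by
    by_contra hc
    rcases eq_or_ne (μ {t | h t = 0}) ⊤ with he | he
    · have h1 := le_trans (measure_mono (show {t | h t = 0} ⊆ {t | h t < 1} by
        intro t ht; simp only [mem_setOf_eq] at ht ⊢; rw [ht]; norm_num)) (H 1)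
      rw [he] at h1; simp at h1
    · have h2 := le_trans (measure_mono (show {t | h t = 0} ⊆ {t | h t < μ {t | h t = 0} / 2} by
        intro t ht; simp only [mem_setOf_eq] at ht ⊢; rw [ht]
        exact ENNReal.div_pos hc (by norm_num))) (H _)
      exact absurd h2 (not_le.mpr (ENNReal.half_lt_self hc he))
  have h_ae : ∀ᵐ t ∂μ, h t ≠ 0 := by rw [ae_iff]; simpa using hpos
  have hfm : AEMeasurable (fun t => (h t ^ (-(2⁻¹:ℝ))).toReal) μ :=
    (hm.pow_const _).ennreal_toReal
  have heq : ∫⁻ t, h t ^ (-(2⁻¹:ℝ)) ∂μ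
      = ∫⁻ t, ENNReal.ofReal ((h t ^ (-(2⁻¹:ℝ))).toReal) ∂μ := by
    apply lintegral_congr_ae
    filter_upwards [h_ae] with t ht
    have hne : h t ^ (-(2⁻¹:ℝ)) ≠ ⊤ := by
      intro hcon
      rcases ENNReal.rpow_eq_top_iff.mp hcon with ⟨h0, _⟩ | ⟨_, hneg⟩
      · exact ht h0
      · norm_num at hneg
    rw [ENNReal.ofReal_toReal hne]
  rw [heq, lintegral_eq_lintegral_meas_lt μ (ae_of_all _ fun t => ENNReal.toReal_nonneg) hfm]
  have hincl : ∀ s : ℝ, 0 < s →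
      {a | s < (h a ^ (-(2⁻¹:ℝ))).toReal} ⊆ {a | h a < (ENNReal.ofReal s) ^ (-(2:ℝ))} := by
    intro s hs a ha
    replace ha : s < (h a ^ (-(2⁻¹:ℝ))).toReal := ha
    show h a < (ENNReal.ofReal s) ^ (-(2:ℝ))
    have hytop : h a ^ (-(2⁻¹:ℝ)) ≠ ⊤ := by
      intro hcon
      rw [hcon] at ha; simp only [ENNReal.toReal_top] at ha; linarith
    have h1 : ENNReal.ofReal s < h a ^ (-(2⁻¹:ℝ)) :=
      (ENNReal.ofReal_lt_iff_lt_toReal hs.le hytop).mpr ha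
    rw [ENNReal.rpow_neg, ENNReal.lt_inv_iff_lt_inv] at h1
    have h2 := ENNReal.rpow_lt_rpow h1 (show (0:ℝ) < 2 by norm_num)
    calc h a = (h a ^ (2⁻¹:ℝ)) ^ (2:ℝ) := by rw [← ENNReal.rpow_mul]; norm_num
      _ < ((ENNReal.ofReal s)⁻¹) ^ (2:ℝ) := h2
      _ = (ENNReal.ofReal s) ^ (-(2:ℝ)) := by
          rw [← ENNReal.rpow_neg_one, ← ENNReal.rpow_mul]; norm_num
  have hsplit : (Ioi (0:ℝ)) = Ioc 0 s0 ∪ Ioi s0 := (Ioc_union_Ioi_eq_Ioi hs0.le).symm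
  rw [hsplit, lintegral_union measurableSet_Ioi (Ioc_disjoint_Ioi le_rfl)]
  have piece1 : ∫⁻ s in Ioc (0:ℝ) s0, μ {a | s < (h a ^ (-(2⁻¹:ℝ))).toReal}
      ≤ μ univ ^ (2⁻¹:ℝ) := by
    have e1 : ∫⁻ _ in Ioc (0:ℝ) s0, μ univ = μ univ * ENNReal.ofReal s0 := by
      rw [setLIntegral_const, Real.volume_Ioc, sub_zero]
    have e2 : μ univ * ENNReal.ofReal s0 = μ univ ^ (2⁻¹:ℝ) := by
      rw [hs0def, ← ENNReal.ofReal_rpow_of_pos hMr, ENNReal.ofReal_toReal hMtop]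
      nth_rewrite 1 [← ENNReal.rpow_one (μ univ)]
      rw [← ENNReal.rpow_add _ _ hM0 hMtop]
      norm_num
    calc ∫⁻ s in Ioc (0:ℝ) s0, μ {a | s < (h a ^ (-(2⁻¹:ℝ))).toReal}
        ≤ ∫⁻ _ in Ioc (0:ℝ) s0, μ univ :=
          setLIntegral_mono' measurableSet_Ioc fun s _ => measure_mono (subset_univ _)
      _ = μ univ ^ (2⁻¹:ℝ) := by rw [e1, e2]
  have piece2 : ∫⁻ s in Ioi s0, μ {a | s < (h a ^ (-(2⁻¹:ℝ))).toReal}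
      ≤ μ univ ^ (2⁻¹:ℝ) := by
    have e3 : ∫ s in Ioi s0, s ^ (-(2:ℝ)) = s0 ^ (-(1:ℝ)) := by
      rw [integral_Ioi_rpow_of_lt (by norm_num) hs0]
      norm_num
    have e4 : ENNReal.ofReal (s0 ^ (-(1:ℝ))) = μ univ ^ (2⁻¹:ℝ) := by
      rw [hs0def, ← Real.rpow_mul (ENNReal.toReal_nonneg)]
      norm_num
      rw [← ENNReal.ofReal_rpow_of_pos hMr, ENNReal.ofReal_toReal hMtop]
    calc ∫⁻ s in Ioi s0, μ {a | s < (h a ^ (-(2⁻¹:ℝ))).toReal}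
        ≤ ∫⁻ s in Ioi s0, ENNReal.ofReal (s ^ (-(2:ℝ))) := by
          apply setLIntegral_mono' measurableSet_Ioi
          intro s hs
          have hs' : 0 < s := hs0.trans hs
          refine le_trans (le_trans (measure_mono (hincl s hs')) (H _)) ?_
          rw [← ENNReal.ofReal_rpow_of_pos hs']
      _ = ENNReal.ofReal (∫ s in Ioi s0, s ^ (-(2:ℝ))) := by
          rw [← ofReal_integral_eq_lintegral_ofReal
            (integrableOn_Ioi_rpow_of_lt (by norm_num) hs0)
            ((ae_restrict_iff' measurableSet_Ioi).mpr (ae_of_all _ fun s hs =>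
              Real.rpow_nonneg (le_of_lt (hs0.trans hs)) _))]
      _ ≤ μ univ ^ (2⁻¹:ℝ) := by rw [e3, e4]
  refine le_trans (add_le_add piece1 piece2) ?_
  rw [two_mul]

lemma lemA (ν : Measure ℝ) (hν : ∀ a : ℝ, ν {a} = 0) (x : ℝ) :
    ∫⁻ t in Ioc 0 x, (ν (Ioc 0 t)) ^ (-(2⁻¹:ℝ)) ∂ν ≤ 2 * (ν (Ioc 0 x)) ^ (2⁻¹:ℝ) := by
  have hmono : Monotone (fun t => ν (Ioc 0 t)) :=
    fun a b hab => measure_mono (Ioc_subset_Ioc_right hab)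
  have hmeas : Measurable (fun t : ℝ => ν (Ioc 0 t)) := hmono.measurable
  have H : ∀ r : ℝ≥0∞, (ν.restrict (Ioc 0 x)) {t | ν (Ioc 0 t) < r} ≤ r := by
    intro r
    rw [Measure.restrict_apply' measurableSet_Ioc]
    exact measIoc_lt_le ν hν x r
  have := key_bound (ν.restrict (Ioc 0 x)) (fun t => ν (Ioc 0 t)) hmeas.aemeasurable H
  rwa [Measure.restrict_apply' measurableSet_Ioc, univ_inter] at this

lemma lemB (ν : Measure ℝ) (hν : ∀ a : ℝ, ν {a} = 0) (x : ℝ) :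
    ∫⁻ t in Ioi x, (ν (Ioi t)) ^ (-(2⁻¹:ℝ)) ∂ν ≤ 2 * (ν (Ioi x)) ^ (2⁻¹:ℝ) := by
  have hmono : Antitone (fun t => ν (Ioi t)) :=
    fun a b hab => measure_mono (Ioi_subset_Ioi hab)
  have hmeas : Measurable (fun t : ℝ => ν (Ioi t)) := hmono.measurable
  have H : ∀ r : ℝ≥0∞, (ν.restrict (Ioi x)) {t | ν (Ioi t) < r} ≤ r := by
    intro r
    rw [Measure.restrict_apply' measurableSet_Ioi]
    exact measIoi_lt_le ν hν x r
  have := key_bound (ν.restrict (Ioi x)) (fun t => ν (Ioi t)) hmeas.aemeasurable H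
  rwa [Measure.restrict_apply' measurableSet_Ioi, univ_inter] at this

lemma sq_halfpow (x : ℝ≥0∞) : (x ^ (2⁻¹:ℝ)) ^ (2:ℕ) = x := by
  rw [← ENNReal.rpow_natCast (x ^ (2⁻¹:ℝ)) 2, ← ENNReal.rpow_mul]
  norm_num

lemma lintegral_off_Ioi0 (k : ℝ → ℝ≥0∞) (hk : ∀ x ≤ (0:ℝ), k x = 0) :
    ∫⁻ x in Ioi (0:ℝ), k x = ∫⁻ x, k x := by
  rw [← lintegral_indicator measurableSet_Ioi]
  congr 1; funext x
  by_cases hx : x ∈ Ioi (0:ℝ)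
  · rw [indicator_of_mem hx]
  · rw [indicator_of_notMem hx, hk x (not_lt.mp hx)]


/-- Sufficiency direction of Muckenhoupt's weighted Hardy inequality on `(0,∞)`:
if `B := sup_{x>0} (∫_x^∞ ρ)^{1/2} (∫_0^x ρ⁻¹)^{1/2} < ∞`, then there is a constant
`C < ∞` such that `∫_0^∞ (∫_0^x u)² ρ ≤ C ∫_0^∞ u² ρ` for all square-integrable `u`. -/
theorem muckenhoupt_hardy_inequality (ρ : ℝ → ℝ)
    (hρmeas : Measurable ρ) (hρpos : ∀ x > (0 : ℝ), 0 < ρ x)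
    (B : ℝ≥0∞) (hB : B < ⊤)
    (hmuck : ∀ x > (0 : ℝ),
      (∫⁻ t in Ioi x, ENNReal.ofReal (ρ t)) *
        (∫⁻ t in Ioc (0 : ℝ) x, ENNReal.ofReal ((ρ t)⁻¹)) ≤ B) :
    ∃ C : ℝ≥0∞, C < ⊤ ∧ ∀ u : ℝ → ℝ, Measurable u →
      (∫⁻ x in Ioi (0 : ℝ), ENNReal.ofReal (u x ^ 2 * ρ x)) < ⊤ →
      (∫⁻ x in Ioi (0 : ℝ), ENNReal.ofReal ((∫ t in Ioc (0 : ℝ) x, u t) ^ 2 * ρ x)) ≤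
        C * ∫⁻ x in Ioi (0 : ℝ), ENNReal.ofReal (u x ^ 2 * ρ x) := by
  set φ : ℝ → ℝ≥0∞ := fun t => ENNReal.ofReal (ρ t) with hφdef
  set ψ : ℝ → ℝ≥0∞ := fun t => ENNReal.ofReal ((ρ t)⁻¹) with hψdef
  have hφm : Measurable φ := hρmeas.ennreal_ofReal
  have hψm : Measurable ψ := hρmeas.inv.ennreal_ofReal
  set ν : Measure ℝ := (volume.restrict (Ioi 0)).withDensity ψ with hνdef
  set νφ : Measure ℝ := (volume.restrict (Ioi 0)).withDensity φ with hνφdef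
  set W : ℝ → ℝ≥0∞ := fun t => ν (Ioc 0 t) with hWdef
  set R : ℝ → ℝ≥0∞ := fun t => νφ (Ioi t) with hRdef
  have hsingr : ∀ a : ℝ, (volume.restrict (Ioi (0:ℝ))) {a} = 0 := by
    intro a
    refine le_antisymm (le_trans (Measure.restrict_le_self _) ?_) zero_le
    simp [Real.volume_singleton]
  have hνsing : ∀ a : ℝ, ν {a} = 0 := fun a =>
    withDensity_absolutelyContinuous _ _ (hsingr a)
  have hνφsing : ∀ a : ℝ, νφ {a} = 0 := fun a =>
    withDensity_absolutelyContinuous _ _ (hsingr a)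
  have hW : ∀ x > (0:ℝ), W x = ∫⁻ t in Ioc 0 x, ψ t := by
    intro x hx
    show ((volume.restrict (Ioi 0)).withDensity ψ) (Ioc 0 x) = _
    rw [withDensity_apply _ measurableSet_Ioc, Measure.restrict_restrict measurableSet_Ioc,
      inter_eq_left.mpr Ioc_subset_Ioi_self]
  have hR : ∀ x > (0:ℝ), R x = ∫⁻ t in Ioi x, φ t := by
    intro x hx
    show ((volume.restrict (Ioi 0)).withDensity φ) (Ioi x) = _
    rw [withDensity_apply _ measurableSet_Ioi, Measure.restrict_restrict measurableSet_Ioi,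
      inter_eq_left.mpr (Ioi_subset_Ioi hx.le)]
  have hprod : ∀ x > (0:ℝ), R x * W x ≤ B := by
    intro x hx
    rw [hR x hx, hW x hx]
    exact hmuck x hx
  have hWpos : ∀ x > (0:ℝ), 0 < W x := by
    intro x hx
    rw [hW x hx]
    rw [pos_iff_ne_zero]
    intro hcon
    have h1 : ψ =ᵐ[volume.restrict (Ioc 0 x)] 0 := (lintegral_eq_zero_iff hψm).mp hcon
    have h2 : (volume.restrict (Ioc 0 x)) {t | ψ t ≠ 0} = 0 := by
      rw [Filter.EventuallyEq, ae_iff] at h1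
      simpa using h1
    rw [Measure.restrict_apply' measurableSet_Ioc] at h2
    have h3 : Ioc 0 x ⊆ {t | ψ t ≠ 0} ∩ Ioc 0 x := by
      intro t ht
      refine ⟨?_, ht⟩
      simp only [mem_setOf_eq, hψdef, ne_eq, ENNReal.ofReal_eq_zero, not_le]
      exact inv_pos.mpr (hρpos t ht.1)
    have h4 : volume (Ioc (0:ℝ) x) = 0 := measure_mono_null h3 h2
    rw [Real.volume_Ioc] at h4
    simp only [ENNReal.ofReal_eq_zero, sub_nonpos] at h4
    linarith
  have hRpos : ∀ x > (0:ℝ), 0 < R x := by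
    intro x hx
    rw [hR x hx]
    rw [pos_iff_ne_zero]
    intro hcon
    have h1 : φ =ᵐ[volume.restrict (Ioi x)] 0 := (lintegral_eq_zero_iff hφm).mp hcon
    have h2 : (volume.restrict (Ioi x)) {t | φ t ≠ 0} = 0 := by
      rw [Filter.EventuallyEq, ae_iff] at h1
      simpa using h1
    rw [Measure.restrict_apply' measurableSet_Ioi] at h2
    have h3 : Ioi x ⊆ {t | φ t ≠ 0} ∩ Ioi x := by
      intro t ht
      refine ⟨?_, ht⟩
      simp only [mem_setOf_eq, hφdef, ne_eq, ENNReal.ofReal_eq_zero, not_le]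
      exact hρpos t (hx.trans ht)
    have h4 : volume (Ioi x) = 0 := measure_mono_null h3 h2
    rw [Real.volume_Ioi] at h4
    exact absurd h4 (by simp)
  have hWtop : ∀ x > (0:ℝ), W x ≠ ⊤ := by
    intro x hx hcon
    have := hprod x hx
    rw [hcon, ENNReal.mul_top (hRpos x hx).ne'] at this
    exact absurd (lt_of_le_of_lt this hB) (lt_irrefl ⊤)
  have hRtop : ∀ x > (0:ℝ), R x ≠ ⊤ := by
    intro x hx hcon
    have := hprod x hx
    rw [hcon, ENNReal.top_mul (hWpos x hx).ne'] at this
    exact absurd (lt_of_le_of_lt this hB) (lt_irrefl ⊤)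
  have hB0 : B ≠ 0 := by
    intro hcon
    have := hprod 1 one_pos
    rw [hcon, le_zero_iff, mul_eq_zero] at this
    rcases this with h | h
    · exact (hRpos 1 one_pos).ne' h
    · exact (hWpos 1 one_pos).ne' h
  have hWmono : Monotone W := fun a b hab => measure_mono (Ioc_subset_Ioc_right hab)
  have hRanti : Antitone R := fun a b hab => measure_mono (Ioi_subset_Ioi hab)
  have hWmeas : Measurable W := hWmono.measurable
  have hRmeas : Measurable R := hRanti.measurable
  -- step3 : comparison of W and R via B
  have step3 : ∀ x > (0:ℝ), (W x) ^ (2⁻¹:ℝ) ≤ B ^ (2⁻¹:ℝ) * ((R x) ^ (2⁻¹:ℝ))⁻¹ := by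
    intro x hx
    have h1 : W x ≤ B / R x := by
      rw [ENNReal.le_div_iff_mul_le (Or.inl (hRpos x hx).ne') (Or.inl (hRtop x hx))]
      rw [mul_comm]
      exact hprod x hx
    calc (W x) ^ (2⁻¹:ℝ) ≤ (B / R x) ^ (2⁻¹:ℝ) := ENNReal.rpow_le_rpow h1 (by norm_num)
      _ = B ^ (2⁻¹:ℝ) * ((R x) ^ (2⁻¹:ℝ))⁻¹ := by
          rw [ENNReal.div_rpow_of_nonneg _ _ (by norm_num), div_eq_mul_inv]
  have step3' : ∀ x > (0:ℝ), (R x) ^ (2⁻¹:ℝ) ≤ B ^ (2⁻¹:ℝ) * ((W x) ^ (2⁻¹:ℝ))⁻¹ := by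
    intro x hx
    have h1 : R x ≤ B / W x := by
      rw [ENNReal.le_div_iff_mul_le (Or.inl (hWpos x hx).ne') (Or.inl (hWtop x hx))]
      exact hprod x hx
    calc (R x) ^ (2⁻¹:ℝ) ≤ (B / W x) ^ (2⁻¹:ℝ) := ENNReal.rpow_le_rpow h1 (by norm_num)
      _ = B ^ (2⁻¹:ℝ) * ((W x) ^ (2⁻¹:ℝ))⁻¹ := by
          rw [ENNReal.div_rpow_of_nonneg _ _ (by norm_num), div_eq_mul_inv]
  -- Lemma A in concrete form
  have stepA : ∀ x > (0:ℝ), ∫⁻ t in Ioc 0 x, ψ t * (W t) ^ (-(2⁻¹:ℝ)) ≤ 2 * (W x) ^ (2⁻¹:ℝ) := by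
    intro x hx
    have h0 := lemA ν hνsing x
    have he : ν.restrict (Ioc 0 x) = (volume.restrict (Ioc 0 x)).withDensity ψ := by
      show ((volume.restrict (Ioi 0)).withDensity ψ).restrict (Ioc 0 x) = _
      rw [restrict_withDensity measurableSet_Ioc,
        Measure.restrict_restrict measurableSet_Ioc, inter_eq_left.mpr Ioc_subset_Ioi_self]
    have h1 : ∫⁻ t in Ioc 0 x, (W t) ^ (-(2⁻¹:ℝ)) ∂ν
        = ∫⁻ t in Ioc 0 x, ψ t * (W t) ^ (-(2⁻¹:ℝ)) := by
      rw [show (∫⁻ t in Ioc 0 x, (W t) ^ (-(2⁻¹:ℝ)) ∂ν)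
          = ∫⁻ t, (W t) ^ (-(2⁻¹:ℝ)) ∂(ν.restrict (Ioc 0 x)) from rfl, he,
        lintegral_withDensity_eq_lintegral_mul _ hψm (hWmeas.pow_const _)]
      rfl
    rw [h1] at h0
    exact h0
  -- Lemma B in concrete form
  have stepB : ∀ t > (0:ℝ), ∫⁻ x in Ioi t, φ x * (R x) ^ (-(2⁻¹:ℝ)) ≤ 2 * (R t) ^ (2⁻¹:ℝ) := by
    intro t ht
    have h0 := lemB νφ hνφsing t
    have he : νφ.restrict (Ioi t) = (volume.restrict (Ioi t)).withDensity φ := by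
      show ((volume.restrict (Ioi 0)).withDensity φ).restrict (Ioi t) = _
      rw [restrict_withDensity measurableSet_Ioi,
        Measure.restrict_restrict measurableSet_Ioi, inter_eq_left.mpr (Ioi_subset_Ioi ht.le)]
    have h1 : ∫⁻ x in Ioi t, (R x) ^ (-(2⁻¹:ℝ)) ∂νφ
        = ∫⁻ x in Ioi t, φ x * (R x) ^ (-(2⁻¹:ℝ)) := by
      rw [show (∫⁻ x in Ioi t, (R x) ^ (-(2⁻¹:ℝ)) ∂νφ)
          = ∫⁻ x, (R x) ^ (-(2⁻¹:ℝ)) ∂(νφ.restrict (Ioi t)) from rfl, he,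
        lintegral_withDensity_eq_lintegral_mul _ hφm (hRmeas.pow_const _)]
      rfl
    rw [h1] at h0
    exact h0
  -- step4
  set A : ℝ → ℝ≥0∞ := fun x => φ x * (W x) ^ (2⁻¹:ℝ) with hAdef
  have hAm : Measurable A := hφm.mul (hWmeas.pow_const _)
  have hBhalf_top : B ^ (2⁻¹:ℝ) ≠ ⊤ := by
    rw [Ne, ENNReal.rpow_eq_top_iff]
    push_neg
    exact ⟨fun h => absurd h hB0, fun h => absurd h hB.ne⟩
  have step4 : ∀ t > (0:ℝ), ∫⁻ x in Ici t, A x ≤ 2 * B * ((W t) ^ (2⁻¹:ℝ))⁻¹ := by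
    intro t ht
    rw [← restrict_Ioi_eq_restrict_Ici]
    have c1 : ∫⁻ x in Ioi t, A x
        ≤ ∫⁻ x in Ioi t, B ^ (2⁻¹:ℝ) * (φ x * (R x) ^ (-(2⁻¹:ℝ))) := by
      apply setLIntegral_mono' measurableSet_Ioi
      intro x hx
      have hx0 : (0:ℝ) < x := ht.trans hx
      calc A x = φ x * (W x) ^ (2⁻¹:ℝ) := rfl
        _ ≤ φ x * (B ^ (2⁻¹:ℝ) * ((R x) ^ (2⁻¹:ℝ))⁻¹) := mul_le_mul_right (step3 x hx0) _
        _ = B ^ (2⁻¹:ℝ) * (φ x * (R x) ^ (-(2⁻¹:ℝ))) := by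
            rw [ENNReal.rpow_neg]; ring
    have c2 : ∫⁻ x in Ioi t, B ^ (2⁻¹:ℝ) * (φ x * (R x) ^ (-(2⁻¹:ℝ)))
        = B ^ (2⁻¹:ℝ) * ∫⁻ x in Ioi t, φ x * (R x) ^ (-(2⁻¹:ℝ)) :=
      lintegral_const_mul' _ _ hBhalf_top
    have hBB : B ^ (2⁻¹:ℝ) * B ^ (2⁻¹:ℝ) = B := by
      rw [← ENNReal.rpow_add _ _ hB0 hB.ne]
      norm_num
    calc ∫⁻ x in Ioi t, A x
        ≤ B ^ (2⁻¹:ℝ) * ∫⁻ x in Ioi t, φ x * (R x) ^ (-(2⁻¹:ℝ)) := le_trans c1 (le_of_eq c2)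
      _ ≤ B ^ (2⁻¹:ℝ) * (2 * (R t) ^ (2⁻¹:ℝ)) := mul_le_mul_right (stepB t ht) _
      _ ≤ B ^ (2⁻¹:ℝ) * (2 * (B ^ (2⁻¹:ℝ) * ((W t) ^ (2⁻¹:ℝ))⁻¹)) :=
          mul_le_mul_right (mul_le_mul_right (step3' t ht) _) _
      _ = 2 * (B ^ (2⁻¹:ℝ) * B ^ (2⁻¹:ℝ)) * ((W t) ^ (2⁻¹:ℝ))⁻¹ := by ring
      _ = 2 * B * ((W t) ^ (2⁻¹:ℝ))⁻¹ := by rw [hBB]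
  refine ⟨4 * B, ENNReal.mul_lt_top (by norm_num) hB, ?_⟩
  intro u hu _
  set V : ℝ → ℝ≥0∞ := fun t => ENNReal.ofReal |u t| with hVdef
  have hVm : Measurable V := hu.abs.ennreal_ofReal
  set G : ℝ → ℝ≥0∞ := fun t => V t ^ 2 * φ t * (W t) ^ (2⁻¹:ℝ) with hGdef
  have hGm : Measurable G := ((hVm.pow_const 2).mul hφm).mul (hWmeas.pow_const _)
  -- Cauchy-Schwarz step
  have step5 : ∀ x > (0:ℝ), (∫⁻ t in Ioc 0 x, V t) ^ 2
      ≤ (∫⁻ t in Ioc 0 x, G t) * (2 * (W x) ^ (2⁻¹:ℝ)) := by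
    intro x hx
    set f : ℝ → ℝ≥0∞ := fun t => V t * (φ t ^ (2⁻¹:ℝ) * W t ^ ((4:ℝ)⁻¹)) with hfdef
    set g : ℝ → ℝ≥0∞ := fun t => (φ t ^ (2⁻¹:ℝ) * W t ^ ((4:ℝ)⁻¹))⁻¹ with hgdef
    have hfm : Measurable f := hVm.mul ((hφm.pow_const _).mul (hWmeas.pow_const _))
    have hgm : Measurable g := ((hφm.pow_const _).mul (hWmeas.pow_const _)).inv
    have hfacts : ∀ t ∈ Ioc (0:ℝ) x,
        φ t ≠ 0 ∧ φ t ≠ ⊤ ∧ W t ≠ 0 ∧ W t ≠ ⊤ := by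
      intro t ht
      refine ⟨?_, ENNReal.ofReal_ne_top, (hWpos t ht.1).ne', ?_⟩
      · simp only [hφdef, ne_eq, ENNReal.ofReal_eq_zero, not_le]
        exact hρpos t ht.1
      · intro hcon
        exact hWtop x hx (top_le_iff.mp (hcon ▸ hWmono ht.2))
    have hVfg : ∀ t ∈ Ioc (0:ℝ) x, V t = (f * g) t := by
      intro t ht
      obtain ⟨hφ0, hφtop, hW0, hWt⟩ := hfacts t ht
      have ha0 : φ t ^ (2⁻¹:ℝ) * W t ^ ((4:ℝ)⁻¹) ≠ 0 := by
        apply mul_ne_zero <;> simp [ENNReal.rpow_eq_zero_iff, hφ0, hφtop, hW0, hWt]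
      have hatop : φ t ^ (2⁻¹:ℝ) * W t ^ ((4:ℝ)⁻¹) ≠ ⊤ := by
        apply ENNReal.mul_ne_top <;> simp [ENNReal.rpow_eq_top_iff, hφ0, hφtop, hW0, hWt]
      show V t = V t * (φ t ^ (2⁻¹:ℝ) * W t ^ ((4:ℝ)⁻¹)) * (φ t ^ (2⁻¹:ℝ) * W t ^ ((4:ℝ)⁻¹))⁻¹
      rw [mul_assoc, ENNReal.mul_inv_cancel ha0 hatop, mul_one]
    have hconj : Real.HolderConjugate 2 2 := Real.HolderConjugate.two_two
    have hcs := ENNReal.lintegral_mul_le_Lp_mul_Lq (volume.restrict (Ioc 0 x)) hconj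
        hfm.aemeasurable hgm.aemeasurable
    have hf2 : ∀ t : ℝ, f t ^ (2:ℝ) = G t := by
      intro t
      show (V t * (φ t ^ (2⁻¹:ℝ) * W t ^ ((4:ℝ)⁻¹))) ^ (2:ℝ)
          = V t ^ 2 * φ t * (W t) ^ (2⁻¹:ℝ)
      rw [ENNReal.mul_rpow_of_nonneg _ _ (by norm_num : (0:ℝ) ≤ 2),
        ENNReal.mul_rpow_of_nonneg _ _ (by norm_num : (0:ℝ) ≤ 2),
        ← ENNReal.rpow_mul, ← ENNReal.rpow_mul,
        show ((2:ℝ)⁻¹*2:ℝ) = 1 by norm_num, show (((4:ℝ)⁻¹)*2:ℝ) = 2⁻¹ by norm_num,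
        ENNReal.rpow_one, ← ENNReal.rpow_natCast (V t) 2,
        show (((2:ℕ)):ℝ) = (2:ℝ) by norm_num, mul_assoc]
    have hg2 : ∀ t ∈ Ioc (0:ℝ) x, g t ^ (2:ℝ) = ψ t * (W t) ^ (-(2⁻¹:ℝ)) := by
      intro t ht
      obtain ⟨hφ0, hφtop, hW0, hWt⟩ := hfacts t ht
      show ((φ t ^ (2⁻¹:ℝ) * W t ^ ((4:ℝ)⁻¹))⁻¹) ^ (2:ℝ) = ψ t * (W t) ^ (-(2⁻¹:ℝ))
      rw [ENNReal.inv_rpow, ENNReal.mul_rpow_of_nonneg _ _ (by norm_num : (0:ℝ) ≤ 2),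
        ← ENNReal.rpow_mul, ← ENNReal.rpow_mul,
        show ((2:ℝ)⁻¹*2:ℝ) = 1 by norm_num, show (((4:ℝ)⁻¹)*2:ℝ) = 2⁻¹ by norm_num,
        ENNReal.rpow_one,
        ENNReal.mul_inv (Or.inl hφ0) (Or.inl hφtop), ← ENNReal.rpow_neg]
      congr 1
      show (ENNReal.ofReal (ρ t))⁻¹ = ψ t
      rw [hψdef]
      exact (ENNReal.ofReal_inv_of_pos (hρpos t ht.1)).symm
    have he1 : ∫⁻ t in Ioc 0 x, V t = ∫⁻ t in Ioc 0 x, (f * g) t :=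
      setLIntegral_congr_fun measurableSet_Ioc hVfg
    calc (∫⁻ t in Ioc 0 x, V t) ^ 2
        = (∫⁻ t in Ioc 0 x, (f * g) t) ^ 2 := by rw [he1]
      _ ≤ ((∫⁻ t in Ioc 0 x, f t ^ (2:ℝ)) ^ (1/(2:ℝ))
            * (∫⁻ t in Ioc 0 x, g t ^ (2:ℝ)) ^ (1/(2:ℝ))) ^ 2 := pow_le_pow_left' hcs 2
      _ = (∫⁻ t in Ioc 0 x, f t ^ (2:ℝ)) * (∫⁻ t in Ioc 0 x, g t ^ (2:ℝ)) := by
          rw [mul_pow, show (1/(2:ℝ)) = (2⁻¹:ℝ) by norm_num, sq_halfpow, sq_halfpow]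
      _ = (∫⁻ t in Ioc 0 x, G t) * (∫⁻ t in Ioc 0 x, ψ t * (W t) ^ (-(2⁻¹:ℝ))) := by
          rw [lintegral_congr hf2, setLIntegral_congr_fun measurableSet_Ioc hg2]
      _ ≤ (∫⁻ t in Ioc 0 x, G t) * (2 * (W x) ^ (2⁻¹:ℝ)) := mul_le_mul_right (stepA x hx) _
  -- Tonelli
  have tonelli : ∫⁻ x in Ioi (0:ℝ), ∫⁻ t in Ioc 0 x, G t * A x
      = ∫⁻ t in Ioi (0:ℝ), G t * ∫⁻ x in Ici t, A x := by
    set s : Set (ℝ × ℝ) := (Prod.snd ⁻¹' (Ioi (0:ℝ))) ∩ {p : ℝ × ℝ | p.2 ≤ p.1} with hsdef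
    have hsm : MeasurableSet s :=
      (measurable_snd measurableSet_Ioi).inter (measurableSet_le measurable_snd measurable_fst)
    have hmem : ∀ x t : ℝ, (x, t) ∈ s ↔ 0 < t ∧ t ≤ x := by
      intro x t
      simp [hsdef, mem_Ioi]
    set F : ℝ → ℝ → ℝ≥0∞ := fun x t => s.indicator (fun p => G p.2 * A p.1) (x, t) with hFdef
    have hFm : Measurable (Function.uncurry F) := by
      have he : Function.uncurry F = s.indicator (fun p => G p.2 * A p.1) := by
        funext p; cases p; rfl
      rw [he]
      exact ((hGm.comp measurable_snd).mul (hAm.comp measurable_fst)).indicator hsm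
    have hinner : ∀ x, ∫⁻ t, F x t = ∫⁻ t in Ioc 0 x, G t * A x := by
      intro x
      have he : ∀ t, F x t = (Ioc 0 x).indicator (fun t => G t * A x) t := by
        intro t
        by_cases h : t ∈ Ioc (0:ℝ) x
        · rw [indicator_of_mem h]
          exact indicator_of_mem ((hmem x t).mpr ⟨h.1, h.2⟩) _
        · rw [indicator_of_notMem h]
          exact indicator_of_notMem (fun hc => h ⟨((hmem x t).mp hc).1, ((hmem x t).mp hc).2⟩) _
      rw [lintegral_congr he, lintegral_indicator measurableSet_Ioc]
    have hinner2 : ∀ t, ∫⁻ x, F x t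
        = (Ioi (0:ℝ)).indicator (fun t => G t * ∫⁻ x in Ici t, A x) t := by
      intro t
      by_cases ht : t ∈ Ioi (0:ℝ)
      · rw [indicator_of_mem ht]
        have he : ∀ x, F x t = (Ici t).indicator (fun x => G t * A x) x := by
          intro x
          by_cases h : x ∈ Ici t
          · rw [indicator_of_mem h]
            exact indicator_of_mem ((hmem x t).mpr ⟨ht, h⟩) _
          · rw [indicator_of_notMem h]
            exact indicator_of_notMem (fun hc => h ((hmem x t).mp hc).2) _
        rw [lintegral_congr he, lintegral_indicator measurableSet_Ici,
          lintegral_const_mul _ hAm]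
      · rw [indicator_of_notMem ht]
        have he : ∀ x, F x t = 0 := by
          intro x
          exact indicator_of_notMem (fun hc => ht ((hmem x t).mp hc).1) _
        rw [lintegral_congr he, lintegral_zero]
    calc ∫⁻ x in Ioi (0:ℝ), ∫⁻ t in Ioc 0 x, G t * A x
        = ∫⁻ x, ∫⁻ t in Ioc 0 x, G t * A x := by
          apply lintegral_off_Ioi0
          intro x hx
          rw [Ioc_eq_empty (not_lt.mpr hx), Measure.restrict_empty, lintegral_zero_measure]
      _ = ∫⁻ x, ∫⁻ t, F x t := by
          apply lintegral_congr; intro x; rw [hinner]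
      _ = ∫⁻ t, ∫⁻ x, F x t := lintegral_lintegral_swap hFm.aemeasurable
      _ = ∫⁻ t, (Ioi (0:ℝ)).indicator (fun t => G t * ∫⁻ x in Ici t, A x) t :=
          lintegral_congr hinner2
      _ = ∫⁻ t in Ioi (0:ℝ), G t * ∫⁻ x in Ici t, A x :=
          lintegral_indicator measurableSet_Ioi _
  -- pointwise domination of the target integrand
  have chain1 : ∀ x ∈ Ioi (0:ℝ), ENNReal.ofReal ((∫ t in Ioc (0:ℝ) x, u t) ^ 2 * ρ x)
      ≤ (∫⁻ t in Ioc 0 x, V t) ^ 2 * φ x := by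
    intro x _
    rw [ENNReal.ofReal_mul (sq_nonneg _)]
    apply mul_le_mul_left
    have h1 : ENNReal.ofReal ((∫ t in Ioc (0:ℝ) x, u t) ^ 2)
        = (ENNReal.ofReal |∫ t in Ioc (0:ℝ) x, u t|) ^ 2 := by
      rw [← sq_abs, ENNReal.ofReal_pow (abs_nonneg _)]
    rw [h1]
    apply pow_le_pow_left' _ 2
    rw [← Real.enorm_eq_ofReal_abs]
    refine le_trans (enorm_integral_le_lintegral_enorm _) (le_of_eq ?_)
    apply lintegral_congr
    intro t
    rw [hVdef]
    exact Real.enorm_eq_ofReal_abs (u t)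
  have chain2 : ∀ x ∈ Ioi (0:ℝ), (∫⁻ t in Ioc 0 x, V t) ^ 2 * φ x
      ≤ 2 * ∫⁻ t in Ioc 0 x, G t * A x := by
    intro x hx
    calc (∫⁻ t in Ioc 0 x, V t) ^ 2 * φ x
        ≤ (∫⁻ t in Ioc 0 x, G t) * (2 * (W x) ^ (2⁻¹:ℝ)) * φ x :=
          mul_le_mul_left (step5 x hx) _
      _ = 2 * ((∫⁻ t in Ioc 0 x, G t) * A x) := by rw [hAdef]; ring
      _ = 2 * ∫⁻ t in Ioc 0 x, G t * A x := by rw [lintegral_mul_const _ hGm]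
  have chain4 : ∀ t ∈ Ioi (0:ℝ), G t * (2 * B * ((W t) ^ (2⁻¹:ℝ))⁻¹)
      = 2 * B * (V t ^ 2 * φ t) := by
    intro t ht
    have hW0 : (W t) ^ (2⁻¹:ℝ) ≠ 0 := by
      simp [ENNReal.rpow_eq_zero_iff, (hWpos t ht).ne', hWtop t ht]
    have hWt : (W t) ^ (2⁻¹:ℝ) ≠ ⊤ := by
      simp [ENNReal.rpow_eq_top_iff, (hWpos t ht).ne', hWtop t ht]
    rw [hGdef]
    show V t ^ 2 * φ t * (W t) ^ (2⁻¹:ℝ) * (2 * B * ((W t) ^ (2⁻¹:ℝ))⁻¹)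
        = 2 * B * (V t ^ 2 * φ t)
    calc V t ^ 2 * φ t * (W t) ^ (2⁻¹:ℝ) * (2 * B * ((W t) ^ (2⁻¹:ℝ))⁻¹)
        = 2 * B * (V t ^ 2 * φ t) * ((W t) ^ (2⁻¹:ℝ) * ((W t) ^ (2⁻¹:ℝ))⁻¹) := by ring
      _ = 2 * B * (V t ^ 2 * φ t) := by
          rw [ENNReal.mul_inv_cancel hW0 hWt, mul_one]
  have chain5 : ∀ t ∈ Ioi (0:ℝ), V t ^ 2 * φ t = ENNReal.ofReal (u t ^ 2 * ρ t) := by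
    intro t _
    rw [ENNReal.ofReal_mul (sq_nonneg _), ← sq_abs (u t), ENNReal.ofReal_pow (abs_nonneg _)]
  calc ∫⁻ x in Ioi (0:ℝ), ENNReal.ofReal ((∫ t in Ioc (0:ℝ) x, u t) ^ 2 * ρ x)
      ≤ ∫⁻ x in Ioi (0:ℝ), (∫⁻ t in Ioc 0 x, V t) ^ 2 * φ x :=
        setLIntegral_mono' measurableSet_Ioi chain1
    _ ≤ ∫⁻ x in Ioi (0:ℝ), 2 * ∫⁻ t in Ioc 0 x, G t * A x :=
        setLIntegral_mono' measurableSet_Ioi chain2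
    _ = 2 * ∫⁻ x in Ioi (0:ℝ), ∫⁻ t in Ioc 0 x, G t * A x :=
        lintegral_const_mul' _ _ (by norm_num)
    _ = 2 * ∫⁻ t in Ioi (0:ℝ), G t * ∫⁻ x in Ici t, A x := by rw [tonelli]
    _ ≤ 2 * ∫⁻ t in Ioi (0:ℝ), G t * (2 * B * ((W t) ^ (2⁻¹:ℝ))⁻¹) := by
        apply mul_le_mul_right
        apply setLIntegral_mono' measurableSet_Ioi
        intro t ht
        exact mul_le_mul_right (step4 t ht) _
    _ = 2 * ∫⁻ t in Ioi (0:ℝ), 2 * B * (V t ^ 2 * φ t) := by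
        rw [setLIntegral_congr_fun measurableSet_Ioi chain4]
    _ = 2 * (2 * B * ∫⁻ t in Ioi (0:ℝ), V t ^ 2 * φ t) := by
        rw [lintegral_const_mul' _ _ (ENNReal.mul_ne_top (by norm_num) hB.ne)]
    _ = 4 * B * ∫⁻ t in Ioi (0:ℝ), V t ^ 2 * φ t := by ring
    _ = 4 * B * ∫⁻ x in Ioi (0:ℝ), ENNReal.ofReal (u x ^ 2 * ρ x) := by
        rw [setLIntegral_congr_fun measurableSet_Ioi chain5]
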